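/- Let R = {(f₁, f₂, f₃, f₄) ∈ ℂ[x]⁴ : x | fᵢ - fⱼ for all i, j, and x² | f₁ - f₂ - f₃ + f₄}. Then R is a subring of ℂ[x]⁴ and a free ℂ[x]-module of rank 4. -/

import Mathlib

open Polynomial

lemma fin4_cases {p : Fin 4 → Prop} (h0 : p 0) (h1 : p 1) (h2 : p 2) (h3 : p 3) :
    ∀ i, p i := by
  intro i
  obtain ⟨n, hn⟩ := i
  interval_cases n
  exacts [h0, h1, h2, h3]

noncomputable def vv : Fin 4 → Fin 4 → Polynomial ℂ :=
  ![![1,1,1,1], ![0,X,0,X], ![0,0,X,X], ![0,0,0,X^2]]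

@[simp] lemma vv00 : vv 0 0 = 1 := rfl
@[simp] lemma vv01 : vv 0 1 = 1 := rfl
@[simp] lemma vv02 : vv 0 2 = 1 := rfl
@[simp] lemma vv03 : vv 0 3 = 1 := rfl
@[simp] lemma vv10 : vv 1 0 = 0 := rfl
@[simp] lemma vv11 : vv 1 1 = X := rfl
@[simp] lemma vv12 : vv 1 2 = 0 := rfl
@[simp] lemma vv13 : vv 1 3 = X := rfl
@[simp] lemma vv20 : vv 2 0 = 0 := rfl
@[simp] lemma vv21 : vv 2 1 = 0 := rfl
@[simp] lemma vv22 : vv 2 2 = X := rfl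
@[simp] lemma vv23 : vv 2 3 = X := rfl
@[simp] lemma vv30 : vv 3 0 = 0 := rfl
@[simp] lemma vv31 : vv 3 1 = 0 := rfl
@[simp] lemma vv32 : vv 3 2 = 0 := rfl
@[simp] lemma vv33 : vv 3 3 = X ^ 2 := rfl

def Sset : Set (Fin 4 → Polynomial ℂ) :=
  {f : Fin 4 → Polynomial ℂ |
    (∀ i j : Fin 4, X ∣ f i - f j) ∧ X ^ 2 ∣ f 0 - f 1 - f 2 + f 3}

lemma vv_mem : ∀ i : Fin 4, vv i ∈ Sset := by
  have hdvd : ∀ i a b : Fin 4, X ∣ vv i a - vv i b := by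
    apply fin4_cases <;> apply fin4_cases <;> apply fin4_cases <;> simp <;>
      first
        | exact dvd_pow_self _ (by norm_num)
        | exact dvd_rfl
  intro i
  refine ⟨hdvd i, ?_⟩
  revert i
  apply fin4_cases <;> simp <;>
    first
      | exact dvd_pow_self _ (by norm_num)
      | exact dvd_rfl

lemma Sset_add {f g : Fin 4 → Polynomial ℂ} (hf : f ∈ Sset) (hg : g ∈ Sset) :
    f + g ∈ Sset := by
  refine ⟨fun i j => ?_, ?_⟩
  · have h : (f + g) i - (f + g) j = (f i - f j) + (g i - g j) := by simp; ring
    rw [h]; exact dvd_add (hf.1 i j) (hg.1 i j)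
  · have h : (f+g) 0 - (f+g) 1 - (f+g) 2 + (f+g) 3
        = (f 0 - f 1 - f 2 + f 3) + (g 0 - g 1 - g 2 + g 3) := by simp; ring
    rw [h]; exact dvd_add hf.2 hg.2

lemma Sset_neg {f : Fin 4 → Polynomial ℂ} (hf : f ∈ Sset) : -f ∈ Sset := by
  refine ⟨fun i j => ?_, ?_⟩
  · have h : (-f) i - (-f) j = -(f i - f j) := by simp; ring
    rw [h]; exact dvd_neg.mpr (hf.1 i j)
  · have h : (-f) 0 - (-f) 1 - (-f) 2 + (-f) 3 = -(f 0 - f 1 - f 2 + f 3) := by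
      simp; ring
    rw [h]; exact dvd_neg.mpr hf.2

lemma Sset_mul {f g : Fin 4 → Polynomial ℂ} (hf : f ∈ Sset) (hg : g ∈ Sset) :
    f * g ∈ Sset := by
  refine ⟨fun i j => ?_, ?_⟩
  · have h : (f * g) i - (f * g) j = f i * (g i - g j) + (f i - f j) * g j := by
      simp; ring
    rw [h]
    exact dvd_add (Dvd.dvd.mul_left (hg.1 i j) _) (Dvd.dvd.mul_right (hf.1 i j) _)
  · have h : (f*g) 0 - (f*g) 1 - (f*g) 2 + (f*g) 3
        = f 0 * (g 0 - g 1 - g 2 + g 3) + (f 0 - f 1) * (g 1 - g 3)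
          + (f 0 - f 2) * (g 2 - g 3) + (f 0 - f 1 - f 2 + f 3) * g 3 := by
      simp; ring
    rw [h]
    refine dvd_add (dvd_add (dvd_add ?_ ?_) ?_) ?_
    · exact Dvd.dvd.mul_left hg.2 _
    · have h2 := mul_dvd_mul (hf.1 0 1) (hg.1 1 3); simpa [sq] using h2
    · have h2 := mul_dvd_mul (hf.1 0 2) (hg.1 2 3); simpa [sq] using h2
    · exact Dvd.dvd.mul_right hf.2 _

lemma Sset_smul (c : Polynomial ℂ) {f : Fin 4 → Polynomial ℂ} (hf : f ∈ Sset) :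
    c • f ∈ Sset := by
  refine ⟨fun i j => ?_, ?_⟩
  · have h : (c • f) i - (c • f) j = c * (f i - f j) := by
      simp [Pi.smul_apply, smul_eq_mul]; ring
    rw [h]; exact Dvd.dvd.mul_left (hf.1 i j) _
  · have h : (c • f) 0 - (c • f) 1 - (c • f) 2 + (c • f) 3
        = c * (f 0 - f 1 - f 2 + f 3) := by simp [Pi.smul_apply, smul_eq_mul]; ring
    rw [h]; exact Dvd.dvd.mul_left hf.2 _

noncomputable def Msub : Submodule (Polynomial ℂ) (Fin 4 → Polynomial ℂ) where
  carrier := Sset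
  add_mem' := Sset_add
  zero_mem' := ⟨fun i j => by simp, by simp⟩
  smul_mem' := Sset_smul

lemma vv_li : LinearIndependent (Polynomial ℂ) vv := by
  rw [Fintype.linearIndependent_iff]
  intro g hg
  have h0 := congrFun hg 0
  have h1 := congrFun hg 1
  have h2 := congrFun hg 2
  have h3 := congrFun hg 3
  simp only [Fin.sum_univ_four, Pi.add_apply, Pi.smul_apply, smul_eq_mul, Pi.zero_apply,
    vv00, vv01, vv02, vv03, vv10, vv11, vv12, vv13, vv20, vv21, vv22, vv23,
    vv30, vv31, vv32, vv33, mul_one, mul_zero, add_zero, zero_add] at h0 h1 h2 h3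
  have hX : (X : Polynomial ℂ) ≠ 0 := X_ne_zero
  rw [h0] at h1 h2 h3
  simp only [zero_add] at h1 h2 h3
  have hg1 : g 1 = 0 := by
    rcases mul_eq_zero.mp h1 with h | h
    · exact h
    · exact absurd h hX
  have hg2 : g 2 = 0 := by
    rcases mul_eq_zero.mp h2 with h | h
    · exact h
    · exact absurd h hX
  rw [hg1, hg2] at h3
  simp only [zero_mul, add_zero, zero_add] at h3
  have hg3 : g 3 = 0 := by
    rcases mul_eq_zero.mp h3 with h | h
    · exact h
    · exact absurd h (pow_ne_zero _ hX)
  exact fin4_cases h0 hg1 hg2 hg3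

lemma span_eq : Submodule.span (Polynomial ℂ) (Set.range vv) = Msub := by
  apply le_antisymm
  · rw [Submodule.span_le]
    rintro _ ⟨i, rfl⟩
    exact vv_mem i
  · intro f hf
    obtain ⟨hd, hd2⟩ := hf
    obtain ⟨a, ha⟩ := hd 1 0
    obtain ⟨b, hb⟩ := hd 2 0
    obtain ⟨c, hc⟩ := hd2
    rw [Submodule.mem_span_range_iff_exists_fun]
    refine ⟨![f 0, a, b, c], ?_⟩
    funext j
    revert j
    apply fin4_cases
    · simp only [Fin.sum_univ_four, Pi.add_apply, Pi.smul_apply, smul_eq_mul,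
        Matrix.cons_val_zero, Matrix.cons_val_one, Matrix.head_cons,
        vv00, vv01, vv02, vv03, vv10, vv11, vv12, vv13, vv20, vv21, vv22, vv23,
        vv30, vv31, vv32, vv33,
        show (![f 0, a, b, c] : Fin 4 → Polynomial ℂ) 2 = b from rfl,
        show (![f 0, a, b, c] : Fin 4 → Polynomial ℂ) 3 = c from rfl]
      ring
    · simp only [Fin.sum_univ_four, Pi.add_apply, Pi.smul_apply, smul_eq_mul,
        Matrix.cons_val_zero, Matrix.cons_val_one, Matrix.head_cons,
        vv00, vv01, vv02, vv03, vv10, vv11, vv12, vv13, vv20, vv21, vv22, vv23,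
        vv30, vv31, vv32, vv33,
        show (![f 0, a, b, c] : Fin 4 → Polynomial ℂ) 2 = b from rfl,
        show (![f 0, a, b, c] : Fin 4 → Polynomial ℂ) 3 = c from rfl]
      linear_combination -ha
    · simp only [Fin.sum_univ_four, Pi.add_apply, Pi.smul_apply, smul_eq_mul,
        Matrix.cons_val_zero, Matrix.cons_val_one, Matrix.head_cons,
        vv00, vv01, vv02, vv03, vv10, vv11, vv12, vv13, vv20, vv21, vv22, vv23,
        vv30, vv31, vv32, vv33,
        show (![f 0, a, b, c] : Fin 4 → Polynomial ℂ) 2 = b from rfl,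
        show (![f 0, a, b, c] : Fin 4 → Polynomial ℂ) 3 = c from rfl]
      linear_combination -hb
    · simp only [Fin.sum_univ_four, Pi.add_apply, Pi.smul_apply, smul_eq_mul,
        Matrix.cons_val_zero, Matrix.cons_val_one, Matrix.head_cons,
        vv00, vv01, vv02, vv03, vv10, vv11, vv12, vv13, vv20, vv21, vv22, vv23,
        vv30, vv31, vv32, vv33,
        show (![f 0, a, b, c] : Fin 4 → Polynomial ℂ) 2 = b from rfl,
        show (![f 0, a, b, c] : Fin 4 → Polynomial ℂ) 3 = c from rfl]
      linear_combination -ha - hb - hc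

theorem stmt_9 :
    ∃ (R : Subring (Fin 4 → Polynomial ℂ))
      (N : Submodule (Polynomial ℂ) (Fin 4 → Polynomial ℂ)),
      (R : Set (Fin 4 → Polynomial ℂ)) =
        {f : Fin 4 → Polynomial ℂ |
          (∀ i j : Fin 4, X ∣ f i - f j) ∧
          X ^ 2 ∣ f 0 - f 1 - f 2 + f 3} ∧
      (N : Set (Fin 4 → Polynomial ℂ)) = (R : Set (Fin 4 → Polynomial ℂ)) ∧
      Nonempty (Module.Basis (Fin 4) (Polynomial ℂ) N) := by
  refine ⟨{ carrier := Sset, add_mem' := Sset_add, zero_mem' := ⟨fun i j => by simp, by simp⟩,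
            mul_mem' := Sset_mul, one_mem' := ⟨fun i j => by simp, by simp⟩,
            neg_mem' := Sset_neg },
          Submodule.span (Polynomial ℂ) (Set.range vv), rfl, ?_, ?_⟩
  · show _ = Sset
    rw [span_eq]; rfl
  · exact ⟨Module.Basis.span vv_li⟩
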